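/- Let φ, ψ be Hilbert functions of degree n whose Castelnuovo diagrams satisfy s_ψ = s_φ + t^u − t^{v+1} with 0 < u ≤ v and v ≥ u+2, and suppose the pair (φ, ψ) has length zero, with generic Betti numbers (aᵢ), (bᵢ) of φ. Then dim H_φ < dim H_ψ if and only if a_u = b_{u+1} + 1 and a_{v+2} = b_{v+3}; and in that case dim H_ψ = dim H_φ + 1. -/

import Mathlib

/-- A Castelnuovo function, as a function `ℤ → ℤ` supported on `ℕ`. -/
def CastelnuovoZ (s : ℤ → ℤ) : Prop :=
  (∀ m, 0 ≤ s m) ∧ (∀ m, m < 0 → s m = 0) ∧ (∃ N : ℤ, ∀ m, N ≤ m → s m = 0) ∧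
  ∃ σ : ℕ, (∀ i : ℕ, i < σ → s i = i + 1) ∧ ∀ m : ℤ, (σ : ℤ) - 1 ≤ m → s (m + 1) ≤ s m

/-- The difference function `s_φ(m) = φ(m) - φ(m-1)`. -/
def diffFn (φ : ℤ → ℤ) : ℤ → ℤ := fun m => φ m - φ (m - 1)

/-- `φ` is a Hilbert function of degree `n`. -/
def IsHilbertFn (n : ℕ) (φ : ℤ → ℤ) : Prop :=
  (∀ m, m < 0 → φ m = 0) ∧ (∃ N : ℤ, ∀ m, N ≤ m → φ m = n) ∧ CastelnuovoZ (diffFn φ)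

/-- The constant term of the Laurent series `(t⁻¹ - t⁻²) s(t⁻¹) s(t)`. -/
noncomputable def cconst (s : ℤ → ℤ) : ℤ := ∑ᶠ m : ℤ, (s (m - 1) - s (m - 2)) * s m

/-- The dimension of the stratum `H_φ`: `dim H_φ = 1 + n + c_φ`. -/
noncomputable def dimStratum (n : ℕ) (φ : ℤ → ℤ) : ℤ := 1 + n + cconst (diffFn φ)

/-- The generic Betti number difference `a_l - b_l = -s_l + 2 s_{l-1} - s_{l-2}`. -/
def bettiDiff (s : ℤ → ℤ) (l : ℤ) : ℤ := -(s l) + 2 * s (l - 1) - s (l - 2)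

/-- The generic Betti number `a_l`. -/
def bettiA (s : ℤ → ℤ) (l : ℤ) : ℤ := max (bettiDiff s l) 0

/-- The generic Betti number `b_l`. -/
def bettiB (s : ℤ → ℤ) (l : ℤ) : ℤ := max (-(bettiDiff s l)) 0

/-- Corollary 3.2.2: for a length-zero pair `(φ, ψ)` with `s_ψ = s_φ + t^u - t^{v+1}`
and `v ≥ u+2`: `dim H_φ < dim H_ψ` iff `a_u = b_{u+1} + 1` and `a_{v+2} = b_{v+3}`,
and in that case `dim H_ψ = dim H_φ + 1`. -/

lemma castelAnti (s : ℤ → ℤ) (σ : ℕ)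
    (h2 : ∀ m : ℤ, (σ : ℤ) - 1 ≤ m → s (m + 1) ≤ s m) :
    ∀ a b : ℤ, (σ : ℤ) - 1 ≤ a → a ≤ b → s b ≤ s a := by
  intro a b ha hab
  refine Int.le_induction (m := a) (motive := fun b _ => s b ≤ s a) le_rfl ?_ b hab
  intro m hm ih
  exact le_trans (h2 m (by omega)) ih

lemma castelBound (s : ℤ → ℤ) (σ : ℕ)
    (hneg : ∀ m, m < 0 → s m = 0)
    (h1 : ∀ i : ℕ, i < σ → s i = i + 1)
    (h2 : ∀ m : ℤ, (σ : ℤ) - 1 ≤ m → s (m + 1) ≤ s m) :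
    ∀ m : ℤ, 0 ≤ m → s m ≤ m + 1 := by
  intro m hm
  by_cases h : m < (σ : ℤ)
  · have := h1 m.toNat (by omega)
    rw [Int.toNat_of_nonneg hm] at this
    omega
  · have h3 : s m ≤ s ((σ : ℤ) - 1) := castelAnti s σ h2 _ _ le_rfl (by omega)
    have h4 : s ((σ : ℤ) - 1) ≤ (σ : ℤ) := by
      rcases Nat.eq_zero_or_pos σ with h5 | h5
      · rw [hneg _ (by omega)]; omega
      · have := h1 (σ - 1) (by omega)
        have e : ((σ - 1 : ℕ) : ℤ) = (σ : ℤ) - 1 := by omega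
        rw [e] at this
        omega
    omega

lemma ext_of_diffFn (f g : ℤ → ℤ) (hneg : ∀ m, m < 0 → f m = g m)
    (hd : ∀ m, f m - f (m - 1) = g m - g (m - 1)) : ∀ m, f m = g m := by
  have key : ∀ m : ℤ, -1 ≤ m → f m = g m := by
    intro m hm
    refine Int.le_induction (m := -1) (motive := fun m _ => f m = g m) (hneg _ (by omega)) ?_ m hm
    intro k hk ih
    have := hd (k + 1)
    have e : k + 1 - 1 = k := by ring
    rw [e] at this
    omega
  intro m
  rcases lt_or_ge m (-1) with h | h
  · exact hneg m (by omega)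
  · exact key m h

lemma exists_tau (n : ℕ) (u v j k : ℤ) (hu : 0 < u) (huj : u ≤ j) (hjk : j < k)
    (hkv : k ≤ v + 1) (hne : j ≠ u ∨ k ≠ v + 1)
    (φ ψ : ℤ → ℤ) (hφ : IsHilbertFn n φ)
    (hψeq : ∀ m, ψ m = φ m + (if u ≤ m ∧ m < v + 1 then 1 else 0))
    (hcast : CastelnuovoZ (fun m =>
      diffFn φ m + (if m = j then 1 else 0) - (if m = k then 1 else 0))) :
    ∃ τ : ℤ → ℤ, IsHilbertFn n τ ∧ (∀ m, φ m ≤ τ m) ∧ (∀ m, τ m ≤ ψ m) ∧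
      τ ≠ φ ∧ τ ≠ ψ := by
  obtain ⟨hφneg, ⟨N, hN⟩, hφC⟩ := hφ
  refine ⟨fun m => φ m + (if j ≤ m ∧ m < k then 1 else 0),
    ⟨?_, ⟨max N k, ?_⟩, ?_⟩, ?_, ?_, ?_, ?_⟩
  · intro m hm
    dsimp only
    rw [hφneg m hm, if_neg (by omega)]
    ring
  · intro m hm
    dsimp only
    rw [hN m (by omega), if_neg (by omega)]
    ring
  · have heq : diffFn (fun m => φ m + (if j ≤ m ∧ m < k then 1 else 0)) =
        fun m => diffFn φ m + (if m = j then 1 else 0) - (if m = k then 1 else 0) := by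
      funext m
      simp only [diffFn]
      split_ifs <;> (try ring) <;> (exfalso; omega)
    rw [heq]
    exact hcast
  · intro m
    dsimp only
    have h : (0 : ℤ) ≤ if j ≤ m ∧ m < k then 1 else 0 := by split_ifs <;> norm_num
    linarith
  · intro m
    dsimp only
    rw [hψeq m]
    have h : (if j ≤ m ∧ m < k then (1:ℤ) else 0) ≤
        (if u ≤ m ∧ m < v + 1 then 1 else 0) := by split_ifs <;> omega
    linarith
  · intro h
    have h2 : φ j + (if j ≤ j ∧ j < k then (1:ℤ) else 0) = φ j := congrFun h j
    rw [if_pos ⟨le_refl j, hjk⟩] at h2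
    omega
  · intro h
    rcases hne with hne | hne
    · have h2 : φ u + (if j ≤ u ∧ u < k then (1:ℤ) else 0) = ψ u := congrFun h u
      rw [hψeq u, if_neg (by omega), if_pos (by omega)] at h2
      omega
    · have h2 : φ k + (if j ≤ k ∧ k < k then (1:ℤ) else 0) = ψ k := congrFun h k
      rw [hψeq k, if_neg (by omega), if_pos (by omega)] at h2
      omega

theorem dimension_condition_iff (n : ℕ) (u v : ℤ) (hu : 0 < u) (hv : u + 2 ≤ v)
    (φ ψ : ℤ → ℤ) (hφ : IsHilbertFn n φ) (hψ : IsHilbertFn n ψ)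
    (hrel : ∀ m, diffFn ψ m =
      diffFn φ m + (if m = u then 1 else 0) - (if m = v + 1 then 1 else 0))
    -- length zero: there is no Hilbert function strictly between `φ` and `ψ`
    (hlz : ¬ ∃ τ : ℤ → ℤ, IsHilbertFn n τ ∧ (∀ m, φ m ≤ τ m) ∧ (∀ m, τ m ≤ ψ m) ∧
      τ ≠ φ ∧ τ ≠ ψ) :
    (dimStratum n φ < dimStratum n ψ ↔
      bettiA (diffFn φ) u = bettiB (diffFn φ) (u + 1) + 1 ∧
      bettiA (diffFn φ) (v + 2) = bettiB (diffFn φ) (v + 3)) ∧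
    (dimStratum n φ < dimStratum n ψ → dimStratum n ψ = dimStratum n φ + 1) := by
  classical
  set s : ℤ → ℤ := diffFn φ with hs
  set s' : ℤ → ℤ := diffFn ψ with hs'
  obtain ⟨hφneg, ⟨Nφ, hNφ⟩, hsC⟩ := id hφ
  obtain ⟨hs0, hsneg, ⟨Ns, hNs⟩, σ, hσ1, hσ2⟩ := id hsC
  obtain ⟨hψneg, ⟨Nψ, hNψ⟩, hs'C⟩ := id hψ
  obtain ⟨hs'0, hs'neg, ⟨Ns', hNs'⟩, σ', hσ'1, hσ'2⟩ := id hs'C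
  simp only [← hs, ← hs'] at hs0 hsneg hNs hσ1 hσ2 hs'0 hs'neg hNs' hσ'1 hσ'2 hrel
  -- pointwise values of s'
  have hru : s' u = s u + 1 := by
    rw [hrel u, if_pos rfl, if_neg (by omega)]; ring
  have hrv1 : s' (v + 1) = s (v + 1) - 1 := by
    rw [hrel (v + 1), if_neg (by omega), if_pos rfl]; ring
  have hro : ∀ m, m ≠ u → m ≠ v + 1 → s' m = s m := by
    intro m h1 h2
    rw [hrel m, if_neg h1, if_neg h2]; ring
  -- bound lemmas
  have hb : ∀ m : ℤ, 0 ≤ m → s m ≤ m + 1 := castelBound s σ hsneg hσ1 hσ2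
  have hb' : ∀ m : ℤ, 0 ≤ m → s' m ≤ m + 1 := castelBound s' σ' hs'neg hσ'1 hσ'2
  have hσu : (σ : ℤ) ≤ u := by
    by_contra h
    have h1 := hσ1 u.toNat (by omega)
    rw [Int.toNat_of_nonneg (by omega : (0:ℤ) ≤ u)] at h1
    have h2 := hb' u (by omega)
    omega
  have hD : ∀ m : ℤ, u - 1 ≤ m → s (m + 1) ≤ s m := fun m hm => hσ2 m (by omega)
  have hσ'u : (σ' : ℤ) ≤ u + 1 := by
    by_contra h
    have h1 := hσ'1 u.toNat (by omega)
    rw [Int.toNat_of_nonneg (by omega : (0:ℤ) ≤ u)] at h1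
    have h2 := hσ'1 (u + 1).toNat (by omega)
    rw [Int.toNat_of_nonneg (by omega : (0:ℤ) ≤ u + 1)] at h2
    have h3 : s' (u + 1) = s (u + 1) := hro (u + 1) (by omega) (by omega)
    have h4 := hD u (by omega)
    omega
  have hF2 : s (v + 2) ≤ s (v + 1) - 1 := by
    have h1 := hσ'2 (v + 1) (by omega)
    have e : v + 1 + 1 = v + 2 := by ring
    rw [e, hrv1, hro (v + 2) (by omega) (by omega)] at h1
    exact h1
  have hF3 : 1 ≤ s (v + 1) := by
    have := hs'0 (v + 1)
    omega
  have hgstep : ∀ m : ℤ, 0 ≤ m → s m ≤ s (m - 1) + 1 := by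
    intro m hm
    by_cases h : m < (σ : ℤ)
    · have h1 := hσ1 m.toNat (by omega)
      rw [Int.toNat_of_nonneg hm] at h1
      rcases lt_or_ge (m - 1) 0 with h2 | h2
      · rw [hsneg (m - 1) h2]; omega
      · have h3 := hσ1 (m - 1).toNat (by omega)
        rw [Int.toNat_of_nonneg h2] at h3
        omega
    · have h1 := hσ2 (m - 1) (by omega)
      have e : m - 1 + 1 = m := by ring
      rw [e] at h1
      omega
  have hψeq : ∀ m, ψ m = φ m + (if u ≤ m ∧ m < v + 1 then 1 else 0) := by
    apply ext_of_diffFn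
    · intro m hm
      rw [hψneg m hm, hφneg m hm, if_neg (by omega)]
      ring
    · intro m
      have h1 : ψ m - ψ (m - 1) = s' m := rfl
      have h2 : φ m - φ (m - 1) = s m := rfl
      have h3 : (if u ≤ m ∧ m < v + 1 then (1:ℤ) else 0) -
          (if u ≤ m - 1 ∧ m - 1 < v + 1 then 1 else 0) =
          (if m = u then 1 else 0) - (if m = v + 1 then 1 else 0) := by
        split_ifs <;> omega
      have h4 := hrel m
      -- goal : ψ m - ψ (m-1) = (φ m + ite) - (φ (m-1) + ite)
      have h5 : (φ m + (if u ≤ m ∧ m < v + 1 then (1:ℤ) else 0)) -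
          (φ (m - 1) + (if u ≤ m - 1 ∧ m - 1 < v + 1 then 1 else 0)) =
          s m + ((if u ≤ m ∧ m < v + 1 then (1:ℤ) else 0) -
            (if u ≤ m - 1 ∧ m - 1 < v + 1 then 1 else 0)) := by
        rw [← h2]; ring
      rw [h5, h3, h1, h4]
      ring
  -- s is constant on (u, v]
  have hE1 : ∀ w : ℤ, u < w → w ≤ v → s w = s (w - 1) := by
    intro w hw1 hw2
    by_contra hne
    have hgw : s w ≤ s (w - 1) - 1 := by
      have h1 := hD (w - 1) (by omega)
      have e : w - 1 + 1 = w := by ring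
      rw [e] at h1
      omega
    refine hlz (exists_tau n u v w (v + 1) hu (by omega) (by omega) le_rfl
      (Or.inl (by omega)) φ ψ hφ hψeq ?_)
    rw [← hs]
    refine ⟨?_, ?_, ⟨max Ns (v + 2), ?_⟩, σ, ?_, ?_⟩
    · intro m
      dsimp only
      by_cases h1 : m = w
      · subst h1
        rw [if_pos rfl, if_neg (by omega)]
        have := hs0 m
        omega
      · by_cases h2 : m = v + 1
        · subst h2
          rw [if_neg h1, if_pos rfl]
          omega
        · rw [if_neg h1, if_neg h2]
          have := hs0 m
          omega
    · intro m hm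
      dsimp only
      rw [if_neg (by omega), if_neg (by omega), hsneg m hm]
      ring
    · intro m hm
      dsimp only
      rw [hNs m (by omega), if_neg (by omega), if_neg (by omega)]
      ring
    · intro i hi
      dsimp only
      have h0 := hσ1 i hi
      rw [if_neg (by omega), if_neg (by omega)]
      omega
    · intro m hm
      dsimp only
      by_cases h1 : m + 1 = w
      · have e1 : m ≠ w := by omega
        have e2 : m ≠ v + 1 := by omega
        have e3 : m + 1 ≠ v + 1 := by omega
        rw [if_pos h1, if_neg e3, if_neg e1, if_neg e2]
        have c1 : s (m + 1) = s w := by rw [h1]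
        have c2 : s m = s (w - 1) := by congr 1; omega
        omega
      · by_cases h2 : m = w
        · by_cases h3 : m + 1 = v + 1
          · rw [if_neg h1, if_pos h3, if_pos h2, if_neg (by omega)]
            have := hD m (by omega)
            omega
          · rw [if_neg h1, if_neg h3, if_pos h2, if_neg (by omega)]
            have := hD m (by omega)
            omega
        · by_cases h3 : m + 1 = v + 1
          · rw [if_neg h1, if_pos h3, if_neg h2, if_neg (by omega)]
            have := hD m (by omega)
            omega
          · by_cases h4 : m = v + 1
            · rw [if_neg h1, if_neg h3, if_neg h2, if_pos h4]
              have c1 : s (m + 1) = s (v + 2) := by congr 1; omega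
              have c2 : s m = s (v + 1) := by rw [h4]
              omega
            · rw [if_neg h1, if_neg h3, if_neg h2, if_neg h4]
              have := hσ2 m hm
              omega
  have hE1' : s (v + 1) = s v := by
    by_contra hne
    have hgv1 : s (v + 1) ≤ s v - 1 := by
      have h1 := hD v (by omega)
      omega
    refine hlz (exists_tau n u v u v hu le_rfl (by omega) (by omega)
      (Or.inr (by omega)) φ ψ hφ hψeq ?_)
    rw [← hs]
    refine ⟨?_, ?_, ⟨max Ns (v + 2), ?_⟩, σ', ?_, ?_⟩
    · intro m
      dsimp only
      by_cases h1 : m = u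
      · rw [if_pos h1, if_neg (by omega)]
        have := hs0 m
        omega
      · by_cases h2 : m = v
        · rw [if_neg h1, if_pos h2]
          have c1 : s m = s v := by rw [h2]
          omega
        · rw [if_neg h1, if_neg h2]
          have := hs0 m
          omega
    · intro m hm
      dsimp only
      rw [if_neg (by omega), if_neg (by omega), hsneg m hm]
      ring
    · intro m hm
      dsimp only
      rw [hNs m (by omega), if_neg (by omega), if_neg (by omega)]
      ring
    · intro i hi
      dsimp only
      have h0 := hσ'1 i hi
      by_cases hiu : (i : ℤ) = u
      · rw [if_pos hiu, if_neg (by omega)]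
        have c1 : s' (i : ℤ) = s (i : ℤ) + 1 := by rw [hiu]; exact hru
        omega
      · have hiv : (i : ℤ) ≠ v := by omega
        rw [if_neg hiu, if_neg hiv]
        have c1 : s' (i : ℤ) = s (i : ℤ) := hro _ hiu (by omega)
        omega
    · intro m hm
      dsimp only
      by_cases h1 : m + 1 = u
      · rw [if_pos h1, if_neg (by omega), if_neg (by omega), if_neg (by omega)]
        have h2 := hσ'2 m hm
        have c1 : s' (m + 1) = s (m + 1) + 1 := by rw [h1]; exact hru
        have c2 : s' m = s m := hro m (by omega) (by omega)
        omega
      · by_cases h2 : m = u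
        · rw [if_neg h1, if_neg (by omega), if_pos h2, if_neg (by omega)]
          have := hD m (by omega)
          omega
        · by_cases h3 : m + 1 = v
          · rw [if_neg h1, if_pos h3, if_neg h2, if_neg (by omega)]
            have h4 := hD m (by omega)
            omega
          · by_cases h4 : m = v
            · rw [if_neg h1, if_neg h3, if_neg h2, if_pos h4]
              have c1 : s (m + 1) = s (v + 1) := by congr 1; omega
              have c2 : s m = s v := by rw [h4]
              omega
            · by_cases h5 : m = v + 1
              · rw [if_neg h1, if_neg h3, if_neg h2, if_neg (by omega)]
                have := hD m (by omega)
                omega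
              · rw [if_neg h1, if_neg h3, if_neg h2, if_neg (by omega)]
                have h6 := hσ'2 m hm
                have c1 : s' (m + 1) = s (m + 1) := hro _ h1 (by omega)
                have c2 : s' m = s m := hro _ h2 h5
                omega
  -- finite supports
  have hsuppG : (Function.support fun m : ℤ => (s (m-1) - s (m-2)) * s m).Finite := by
    apply Set.Finite.subset (Set.finite_Icc (0:ℤ) Ns)
    intro m hm
    simp only [Function.mem_support, ne_eq] at hm
    simp only [Set.mem_Icc]
    constructor
    · by_contra h
      exact hm (by rw [hsneg m (by omega)]; ring)
    · by_contra h
      exact hm (by rw [hNs m (by omega)]; ring)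
  have hsuppG' : (Function.support fun m : ℤ => (s' (m-1) - s' (m-2)) * s' m).Finite := by
    apply Set.Finite.subset (Set.finite_Icc (0:ℤ) Ns')
    intro m hm
    simp only [Function.mem_support, ne_eq] at hm
    simp only [Set.mem_Icc]
    constructor
    · by_contra h
      exact hm (by rw [hs'neg m (by omega)]; ring)
    · by_contra h
      exact hm (by rw [hNs' m (by omega)]; ring)
  have hsuppD : (Function.support fun m : ℤ =>
      (s' (m-1) - s' (m-2)) * s' m - (s (m-1) - s (m-2)) * s m).Finite := by
    apply Set.Finite.subset (hsuppG'.union hsuppG)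
    intro m hm
    simp only [Function.mem_support, ne_eq, Set.mem_union] at hm ⊢
    by_contra hc
    push_neg at hc
    exact hm (by rw [hc.1, hc.2]; ring)
  have hsplit : cconst s' = cconst s + ∑ᶠ m : ℤ,
      ((s' (m-1) - s' (m-2)) * s' m - (s (m-1) - s (m-2)) * s m) := by
    simp only [cconst]
    have e : (fun m : ℤ => (s' (m-1) - s' (m-2)) * s' m) = fun m : ℤ =>
        (s (m-1) - s (m-2)) * s m +
          ((s' (m-1) - s' (m-2)) * s' m - (s (m-1) - s (m-2)) * s m) := by
      funext m; ring
    calc (∑ᶠ m : ℤ, (s' (m-1) - s' (m-2)) * s' m)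
        = ∑ᶠ m : ℤ, ((s (m-1) - s (m-2)) * s m +
            ((s' (m-1) - s' (m-2)) * s' m - (s (m-1) - s (m-2)) * s m)) := by rw [e]
      _ = _ := finsum_add_distrib hsuppG hsuppD
  have hT : (∑ᶠ m : ℤ, ((s' (m-1) - s' (m-2)) * s' m - (s (m-1) - s (m-2)) * s m))
      = ∑ m ∈ ({u, u+1, u+2, v+1, v+2, v+3} : Finset ℤ),
          ((s' (m-1) - s' (m-2)) * s' m - (s (m-1) - s (m-2)) * s m) := by
    apply finsum_eq_sum_of_support_subset
    intro m hm
    simp only [Function.mem_support, ne_eq] at hm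
    simp only [Finset.coe_insert, Set.mem_insert_iff, Finset.coe_singleton,
      Set.mem_singleton_iff]
    by_contra hc
    push_neg at hc
    obtain ⟨c1, c2, c3, c4, c5, c6⟩ := hc
    exact hm (by rw [hro m c1 c4, hro (m-1) (by omega) (by omega),
      hro (m-2) (by omega) (by omega)]; ring)
  have hsum : (∑ m ∈ ({u, u+1, u+2, v+1, v+2, v+3} : Finset ℤ),
        ((s' (m-1) - s' (m-2)) * s' m - (s (m-1) - s (m-2)) * s m))
      = (s (u-1) - s (u-2)) + s (u+1) - s (u+2) - (s v - s (v-1)) - s (v+2) + s (v+3) := by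
    rw [Finset.sum_insert (by simp only [Finset.mem_insert, Finset.mem_singleton]; omega),
      Finset.sum_insert (by simp only [Finset.mem_insert, Finset.mem_singleton]; omega),
      Finset.sum_insert (by simp only [Finset.mem_insert, Finset.mem_singleton]; omega),
      Finset.sum_insert (by simp only [Finset.mem_insert, Finset.mem_singleton]; omega),
      Finset.sum_pair (by omega)]
    simp only [show u+1-1 = u from by ring, show u+1-2 = u-1 from by ring,
      show u+2-1 = u+1 from by ring, show u+2-2 = u from by ring,
      show v+1-1 = v from by ring, show v+1-2 = v-1 from by ring,
      show v+2-1 = v+1 from by ring, show v+2-2 = v from by ring,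
      show v+3-1 = v+2 from by ring, show v+3-2 = v+1 from by ring]
    rw [hru, hrv1, hro (u-1) (by omega) (by omega), hro (u-2) (by omega) (by omega),
      hro (u+1) (by omega) (by omega), hro (u+2) (by omega) (by omega),
      hro v (by omega) (by omega), hro (v-1) (by omega) (by omega),
      hro (v+2) (by omega) (by omega), hro (v+3) (by omega) (by omega)]
    ring
  have hc1 : s (u+2) = s (u+1) := by
    have h := hE1 (u+2) (by omega) (by omega)
    rw [show u+2-1 = u+1 from by ring] at h
    exact h
  have hc2 : s (u+1) = s u := by
    have h := hE1 (u+1) (by omega) (by omega)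
    rw [show u+1-1 = u from by ring] at h
    exact h
  have hc3 : s v = s (v-1) := hE1 v (by omega) (by omega)
  have hdim : dimStratum n ψ = dimStratum n φ +
      ((s (u-1) - s (u-2)) + (s (v+3) - s (v+2))) := by
    simp only [dimStratum, ← hs, ← hs']
    have := hsplit
    rw [hT, hsum] at this
    omega
  have hA1 : s (u-1) ≤ s (u-2) + 1 := by
    have h := hgstep (u-1) (by omega)
    rw [show u-1-1 = u-2 from by ring] at h
    exact h
  have hB0 : s (v+3) ≤ s (v+2) := by
    have h := hD (v+2) (by omega)
    rw [show v+2+1 = v+3 from by ring] at h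
    exact h
  have hgu : s u ≤ s (u-1) := by
    have h := hD (u-1) (by omega)
    rw [show u-1+1 = u from by ring] at h
    exact h
  have hbB1 : bettiB s (u+1) = s (u-1) - s u := by
    simp only [bettiB, bettiDiff, show u+1-1 = u from by ring,
      show u+1-2 = u-1 from by ring]
    rw [hc2]
    omega
  have hbA2 : bettiA s (v+2) = s (v+1) - s (v+2) := by
    simp only [bettiA, bettiDiff, show v+2-1 = v+1 from by ring,
      show v+2-2 = v from by ring]
    omega
  rw [hdim]
  constructor
  · constructor
    · intro hlt
      have hA : s (u-1) = s (u-2) + 1 := by omega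
      have hB : s (v+3) = s (v+2) := by omega
      constructor
      · rw [hbB1]
        simp only [bettiA, bettiDiff]
        omega
      · rw [hbA2]
        simp only [bettiB, bettiDiff, show v+3-1 = v+2 from by ring,
          show v+3-2 = v+1 from by ring]
        omega
    · rintro ⟨h1, h2⟩
      rw [hbB1] at h1
      simp only [bettiA, bettiDiff] at h1
      have hA : s (u-1) = s (u-2) + 1 := by omega
      rw [hbA2] at h2
      simp only [bettiB, bettiDiff, show v+3-1 = v+2 from by ring,
        show v+3-2 = v+1 from by ring] at h2
      have hB : s (v+3) = s (v+2) := by omega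
      omega
  · intro hlt
    omega
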